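/- There exists a constant C > 0 such that for all natural numbers n and all t > 0, s_n(t) ≤ C/(n+1)², where s_n(t) = (n+1) · e^{-t} e^{√((n+1)²+t²)} · (t/(n+1+√((n+1)²+t²)))^{n+1} / (t · (1+(n+1)²+t²)^{1/4}). -/

import Mathlib

open Real

lemma exp_le_inv_one_sub' {z : ℝ} (hz : z < 1) : Real.exp z ≤ 1/(1-z) := by
  have h := Real.add_one_le_exp (-z)
  rw [Real.exp_neg] at h
  have he := Real.exp_pos z
  rw [le_div_iff₀ (by linarith)]
  have h2 := mul_le_mul_of_nonneg_left h he.le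
  rw [mul_inv_cancel₀ he.ne'] at h2
  nlinarith

lemma two_pow_lin : ∀ k : ℕ, 2*(k:ℝ)+1 ≤ 2^(k+1) := by
  intro k; induction k with
  | zero => norm_num
  | succ n ih =>
    have h0 : (1:ℝ) ≤ 2^n := one_le_pow₀ (by norm_num)
    have hp : (2:ℝ)^(n+1+1) = 2*(2^n*2) := by rw [pow_succ, pow_succ]; ring
    push_cast at ih ⊢
    rw [hp]
    rw [pow_succ] at ih
    nlinarith

lemma sq_le_two_two_pow : ∀ k : ℕ, ((k:ℝ))^2 ≤ 2*2^k := by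
  intro k; induction k with
  | zero => norm_num
  | succ n ih =>
    have h2 := two_pow_lin n
    have hp : (2:ℝ)^(n+1) = 2*2^n := by rw [pow_succ]; ring
    push_cast at ih ⊢
    rw [hp]
    rw [hp] at h2
    nlinarith

lemma keyA (m t : ℝ) (hm : 1 ≤ m) (ht : 0 < t) :
    Real.exp ((Real.sqrt (m^2 + t^2) - t)/m) * (t + m/4) ≤ m + Real.sqrt (m^2 + t^2) := by
  set r := Real.sqrt (m^2 + t^2) with hr
  have hm0 : (0:ℝ) < m := by linarith
  have hr2 : r^2 = m^2 + t^2 := Real.sq_sqrt (by positivity)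
  have hrm : m ≤ r := by
    have : Real.sqrt (m^2) ≤ r := Real.sqrt_le_sqrt (by nlinarith)
    rwa [Real.sqrt_sq hm0.le] at this
  have hrpos : 0 < r := lt_of_lt_of_le hm0 hrm
  have hrmt : r < m + t := by nlinarith
  have htr : t < r := by nlinarith
  rcases le_or_gt r (3*t) with hc | hc
  · -- main case
    have hz : (r - t)/m < 1 := by rw [div_lt_one hm0]; linarith
    have hA : Real.exp ((r-t)/m) ≤ 1/(1-(r-t)/m) := exp_le_inv_one_sub' hz
    have h1m : 1 - (r-t)/m = (m + t - r)/m := by field_simp; ring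
    have hpos : 0 < m + t - r := by linarith
    have hA' : Real.exp ((r-t)/m) ≤ m/(m+t-r) := by
      rw [h1m, one_div_div] at hA; exact hA
    calc Real.exp ((r-t)/m) * (t + m/4) ≤ (m/(m+t-r)) * (t + m/4) := by
          apply mul_le_mul_of_nonneg_right hA' (by linarith)
      _ ≤ m + r := by
          rw [div_mul_eq_mul_div, div_le_iff₀ hpos]
          nlinarith
  · -- small t case
    have ht2 : t^2 ≤ m^2/8 := by nlinarith
    have htm : t ≤ 0.36*m := by nlinarith
    have hrm' : r ≤ 1.07*m := by nlinarith
    have hA : Real.exp ((r-t)/m) ≤ Real.exp 1.07 := by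
      apply Real.exp_le_exp.mpr
      rw [div_le_iff₀ hm0]
      linarith
    have h07 : Real.exp 0.07 ≤ 1/(1-0.07) := exp_le_inv_one_sub' (by norm_num)
    have he1 : Real.exp 1 < 2.7182818286 := Real.exp_one_lt_d9
    have hA2 : Real.exp 1.07 ≤ 2.93 := by
      have : Real.exp 1.07 = Real.exp 1 * Real.exp 0.07 := by
        rw [← Real.exp_add]; norm_num
      rw [this]
      have h07' : Real.exp 0.07 ≤ 100/93 := by rw [show (1:ℝ)-0.07 = 93/100 by norm_num] at h07; linarith [h07]
      nlinarith [Real.exp_pos 1, Real.exp_pos 0.07]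
    calc Real.exp ((r-t)/m) * (t + m/4) ≤ 2.93 * (0.36*m + m/4) := by
          apply mul_le_mul (hA.trans hA2) (by linarith) (by linarith) (by norm_num)
      _ ≤ m + r := by nlinarith

set_option maxHeartbeats 2000000 in
lemma keyB (n : ℕ) (t : ℝ) (ht : 0 < t) :
    ((n:ℝ)+1)^3 * (t/(t+((n:ℝ)+1)/4))^(n+1)
      ≤ 100 * (t * (1 + ((n:ℝ)+1)^2 + t^2) ^ ((1:ℝ)/4)) := by
  obtain ⟨m, hm⟩ : ∃ m : ℝ, m = (n:ℝ)+1 := ⟨_, rfl⟩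
  rw [← hm]
  have hm1 : (1:ℝ) ≤ m := by rw [hm]; linarith [(Nat.cast_nonneg n : (0:ℝ) ≤ n)]
  have hm0 : (0:ℝ) < m := by linarith
  have hX : (0:ℝ) < 1 + m^2 + t^2 := by positivity
  obtain ⟨Q, hQdef⟩ : ∃ q : ℝ, q = (1 + m^2 + t^2) ^ ((1:ℝ)/4) := ⟨_, rfl⟩
  rw [← hQdef]
  have hQpos : 0 < Q := hQdef ▸ Real.rpow_pos_of_pos hX _
  have hQ2 : Q^2 = Real.sqrt (1 + m^2 + t^2) := by
    rw [hQdef, Real.sqrt_eq_rpow, ← Real.rpow_natCast ((1 + m^2 + t^2) ^ ((1:ℝ)/4)) 2,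
      ← Real.rpow_mul hX.le]
    norm_num
  have htQ2 : t ≤ Q^2 := by
    rw [hQ2]
    have h := Real.sqrt_le_sqrt (show t^2 ≤ 1 + m^2 + t^2 by nlinarith)
    rwa [Real.sqrt_sq ht.le] at h
  have hsqt_le : Real.sqrt t ≤ Q := by
    have h := Real.sqrt_le_sqrt htQ2
    rwa [Real.sqrt_sq hQpos.le] at h
  have hQ1 : (1:ℝ) ≤ Q := by
    have h1 : (1:ℝ) ≤ Q^2 := by
      rw [hQ2]
      have h := Real.sqrt_le_sqrt (show (1:ℝ) ≤ 1 + m^2 + t^2 by nlinarith)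
      simpa using h
    nlinarith
  have hxlt : t/(t+m/4) ≤ 1 := by
    rw [div_le_one (by linarith)]; linarith
  have hxpos : 0 < t/(t+m/4) := by positivity
  have htQ : 0 < t * Q := mul_pos ht hQpos
  rcases le_or_gt (m^2) t with hI | hI
  · -- Case I : t ≥ m²
    have hmt : m ≤ Real.sqrt t := by
      have h := Real.sqrt_le_sqrt hI
      rwa [Real.sqrt_sq hm0.le] at h
    have h1 : m^3 ≤ t * Real.sqrt t := by nlinarith [Real.sqrt_nonneg t]
    have h2 : (t/(t+m/4))^(n+1) ≤ 1 := pow_le_one₀ hxpos.le hxlt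
    calc m^3 * (t/(t+m/4))^(n+1) ≤ m^3 * 1 :=
          mul_le_mul_of_nonneg_left h2 (by positivity)
      _ = m^3 := mul_one _
      _ ≤ t * Real.sqrt t := h1
      _ ≤ t * Q := by nlinarith
      _ ≤ 100 * (t*Q) := by nlinarith
  rcases le_or_gt t (m/8) with hII | hII
  · -- Case II : t ≤ m/8
    have hx4 : t/(t+m/4) ≤ 4*t/m := by
      rw [div_le_div_iff₀ (by linarith) hm0]; nlinarith
    have hxh : t/(t+m/4) ≤ 1/2 := by
      calc t/(t+m/4) ≤ 4*t/m := hx4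
        _ ≤ 1/2 := by rw [div_le_iff₀ hm0]; linarith
    have hpow : (t/(t+m/4))^(n+1) ≤ (1/2)^n * (4*t/m) := by
      rw [pow_succ]
      exact mul_le_mul (pow_le_pow_left₀ hxpos.le hxh n) hx4 hxpos.le (by positivity)
    have hsq : m^2 ≤ 4*2^n := by
      have h := sq_le_two_two_pow (n+1)
      have hp : (2:ℝ)^(n+1) = 2*2^n := by rw [pow_succ]; ring
      rw [hp] at h
      push_cast at h
      rw [hm]; nlinarith
    have h2n : (0:ℝ) < 2^n := by positivity
    have key : m^3 * ((1/2)^n * (4*t/m)) ≤ 16*t := by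
      have he : m^3 * ((1/2)^n * (4*t/m)) = 4*t*m^2/2^n := by
        rw [div_pow, one_pow]
        field_simp
      rw [he, div_le_iff₀ h2n]
      nlinarith
    calc m^3 * (t/(t+m/4))^(n+1) ≤ m^3 * ((1/2)^n * (4*t/m)) :=
          mul_le_mul_of_nonneg_left hpow (by positivity)
      _ ≤ 16*t := key
      _ ≤ 100 * (t*Q) := by nlinarith
  · -- Case III : m/8 < t < m²
    obtain ⟨u, hu⟩ : ∃ u : ℝ, u = m/(4*t) := ⟨_, rfl⟩
    have hupos : 0 < u := by rw [hu]; positivity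
    have hz : u/(1+u) < 1 := by rw [div_lt_one (by linarith)]; linarith
    have hexp : Real.exp (u/(1+u)) ≤ 1 + u := by
      have h := exp_le_inv_one_sub' hz
      have he : 1/(1 - u/(1+u)) = 1 + u := by
        rw [show 1 - u/(1+u) = 1/(1+u) by field_simp; ring]
        simp
      rwa [he] at h
    have hx_eq : t/(t+m/4) = (1+u)⁻¹ := by
      rw [hu]
      rw [show (1:ℝ) + m/(4*t) = (4*t+m)/(4*t) by field_simp]
      rw [inv_div, div_eq_div_iff (by positivity) (by positivity)]
      ring
    have hxexp : t/(t+m/4) ≤ Real.exp (-(u/(1+u))) := by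
      rw [hx_eq, Real.exp_neg]
      exact inv_anti₀ (Real.exp_pos _) hexp
    have hxn : (t/(t+m/4))^(n+1) ≤ Real.exp (-(m^2/(4*t+m))) := by
      calc (t/(t+m/4))^(n+1) ≤ (Real.exp (-(u/(1+u))))^(n+1) :=
            pow_le_pow_left₀ hxpos.le hxexp (n+1)
        _ = Real.exp (((n:ℝ)+1) * (-(u/(1+u)))) := by
            rw [← Real.exp_nat_mul]; congr 1; push_cast; ring
        _ = Real.exp (-(m^2/(4*t+m))) := by
            have h4t : (4:ℝ)*t ≠ 0 := by positivity
            have h4tm : (4:ℝ)*t + m ≠ 0 := by positivity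
            have e1 : u/(1+u) = m/(4*t+m) := by
              rw [hu]
              field_simp
            congr 1
            rw [← hm, e1]
            ring
    obtain ⟨y, hy⟩ : ∃ y : ℝ, y = m^2/(12*t) := ⟨_, rfl⟩
    have hypos : 0 < y := by rw [hy]; positivity
    have hmono : Real.exp (-(m^2/(4*t+m))) ≤ Real.exp (-y) := by
      apply Real.exp_le_exp.mpr
      rw [hy]
      have h1 : 4*t+m ≤ 12*t := by linarith
      have h2 : m^2/(12*t) ≤ m^2/(4*t+m) :=
        div_le_div_of_nonneg_left (by positivity) (by linarith) h1
      linarith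
    -- now show m^3 * exp(-y) ≤ 77 * (t * sqrt t)
    have hcube : (2*y/3)^3 ≤ Real.exp (2*y) := by
      have h1 : 2*y/3 ≤ Real.exp (2*y/3) := by
        have := Real.add_one_le_exp (2*y/3); linarith
      calc (2*y/3)^3 ≤ (Real.exp (2*y/3))^3 := pow_le_pow_left₀ (by positivity) h1 3
        _ = Real.exp (3 * (2*y/3)) := by rw [← Real.exp_nat_mul]; norm_num
        _ = Real.exp (2*y) := by congr 1; ring
    have h1 : Real.exp (-y)^2 = Real.exp (-(2*y)) := by
      rw [pow_two, ← Real.exp_add]; congr 1; ring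
    have h2 : Real.exp (-(2*y)) * Real.exp (2*y) = 1 := by
      rw [← Real.exp_add]; simp
    have h3 : Real.exp (-(2*y)) * (2*y/3)^3 ≤ 1 := by
      calc Real.exp (-(2*y)) * (2*y/3)^3 ≤ Real.exp (-(2*y)) * Real.exp (2*y) :=
            mul_le_mul_of_nonneg_left hcube (Real.exp_pos _).le
        _ = 1 := h2
    have h4 : Real.exp (-(2*y)) * y^3 ≤ 27/8 := by nlinarith [Real.exp_pos (-(2*y))]
    have hm6 : m^6 = 1728 * y^3 * t^3 := by
      rw [hy]; field_simp; ring
    have hfin2 : (m^3 * Real.exp (-y))^2 ≤ (77*(t*Real.sqrt t))^2 := by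
      have hrt : (Real.sqrt t)^2 = t := Real.sq_sqrt ht.le
      have e1 : (m^3 * Real.exp (-y))^2 = 1728 * y^3 * t^3 * Real.exp (-(2*y)) := by
        have : (m^3 * Real.exp (-y))^2 = m^6 * Real.exp (-y)^2 := by ring
        rw [this, hm6, h1]
      have e2 : (77*(t*Real.sqrt t))^2 = 5929 * (t^2 * t) := by
        have : (77*(t*Real.sqrt t))^2 = 5929 * (t^2 * (Real.sqrt t)^2) := by ring
        rw [this, hrt]
      rw [e1, e2]
      nlinarith [h4, pow_pos ht 3]
    have hfin : m^3 * Real.exp (-y) ≤ 77*(t*Real.sqrt t) := by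
      have hnn1 : 0 ≤ m^3 * Real.exp (-y) := by positivity
      have hnn2 : 0 ≤ 77*(t*Real.sqrt t) := by positivity
      have h := Real.sqrt_le_sqrt hfin2
      rwa [Real.sqrt_sq hnn1, Real.sqrt_sq hnn2] at h
    calc m^3 * (t/(t+m/4))^(n+1) ≤ m^3 * Real.exp (-(m^2/(4*t+m))) :=
          mul_le_mul_of_nonneg_left hxn (by positivity)
      _ ≤ m^3 * Real.exp (-y) := mul_le_mul_of_nonneg_left hmono (by positivity)
      _ ≤ 77*(t*Real.sqrt t) := hfin
      _ ≤ 77*(t*Q) := by nlinarith [Real.sqrt_nonneg t]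
      _ ≤ 100 * (t*Q) := by nlinarith


/-- There is `C > 0` such that for all `n ∈ ℕ` and `t > 0`,
`s_n(t) ≤ C/(n+1)²`, where
`s_n(t) = (n+1) e^{-t+√((n+1)²+t²)} (t/(n+1+√((n+1)²+t²)))^{n+1} / (t (1+(n+1)²+t²)^{1/4})`. -/
theorem sn_sup_bound :
    ∃ C : ℝ, 0 < C ∧ ∀ (n : ℕ) (t : ℝ), 0 < t →
      ((n : ℝ) + 1) * Real.exp (-t + Real.sqrt (((n : ℝ) + 1) ^ 2 + t ^ 2)) *
          (t / ((n : ℝ) + 1 + Real.sqrt (((n : ℝ) + 1) ^ 2 + t ^ 2))) ^ (n + 1) /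
          (t * (1 + ((n : ℝ) + 1) ^ 2 + t ^ 2) ^ ((1 : ℝ) / 4))
        ≤ C / ((n : ℝ) + 1) ^ 2 := by
  refine ⟨100, by norm_num, ?_⟩
  intro n t ht
  have hm1 : (1:ℝ) ≤ (n:ℝ)+1 := by linarith [(Nat.cast_nonneg n : (0:ℝ) ≤ n)]
  have hm0 : (0:ℝ) < (n:ℝ)+1 := by linarith
  have hA := keyA ((n:ℝ)+1) t hm1 ht
  have hrm : (n:ℝ)+1 ≤ Real.sqrt (((n:ℝ)+1)^2+t^2) := by
    have h := Real.sqrt_le_sqrt (show ((n:ℝ)+1)^2 ≤ ((n:ℝ)+1)^2 + t^2 by nlinarith)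
    rwa [Real.sqrt_sq hm0.le] at h
  have hmr : 0 < (n:ℝ)+1 + Real.sqrt (((n:ℝ)+1)^2+t^2) := by linarith
  have hden : 0 < t + ((n:ℝ)+1)/4 := by linarith
  have base : Real.exp ((Real.sqrt (((n:ℝ)+1)^2+t^2) - t)/((n:ℝ)+1)) *
      (t/((n:ℝ)+1 + Real.sqrt (((n:ℝ)+1)^2+t^2))) ≤ t/(t+((n:ℝ)+1)/4) := by
    rw [mul_div_assoc', div_le_div_iff₀ hmr hden]
    nlinarith [mul_le_mul_of_nonneg_left hA ht.le]
  have perpow : Real.exp (-t + Real.sqrt (((n:ℝ)+1)^2+t^2)) *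
      (t/((n:ℝ)+1 + Real.sqrt (((n:ℝ)+1)^2+t^2)))^(n+1)
      ≤ (t/(t+((n:ℝ)+1)/4))^(n+1) := by
    have hEP : (Real.exp ((Real.sqrt (((n:ℝ)+1)^2+t^2) - t)/((n:ℝ)+1)) *
        (t/((n:ℝ)+1 + Real.sqrt (((n:ℝ)+1)^2+t^2))))^(n+1)
        = Real.exp (-t + Real.sqrt (((n:ℝ)+1)^2+t^2)) *
          (t/((n:ℝ)+1 + Real.sqrt (((n:ℝ)+1)^2+t^2)))^(n+1) := by
      rw [mul_pow, ← Real.exp_nat_mul]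
      congr 2
      push_cast
      field_simp
      ring
    rw [← hEP]
    exact pow_le_pow_left₀ (by positivity) base (n+1)
  rw [div_le_div_iff₀ (by positivity) (by positivity)]
  calc ((n:ℝ)+1) * Real.exp (-t + Real.sqrt (((n:ℝ)+1)^2+t^2)) *
        (t/((n:ℝ)+1 + Real.sqrt (((n:ℝ)+1)^2+t^2)))^(n+1) * ((n:ℝ)+1)^2
      = ((n:ℝ)+1)^3 * (Real.exp (-t + Real.sqrt (((n:ℝ)+1)^2+t^2)) *
        (t/((n:ℝ)+1 + Real.sqrt (((n:ℝ)+1)^2+t^2)))^(n+1)) := by ring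
    _ ≤ ((n:ℝ)+1)^3 * (t/(t+((n:ℝ)+1)/4))^(n+1) :=
        mul_le_mul_of_nonneg_left perpow (by positivity)
    _ ≤ 100 * (t * (1 + ((n:ℝ)+1)^2 + t^2) ^ ((1:ℝ)/4)) := keyB n t ht
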